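/- Let F₂(x) = (μ/2)·(1−x³) + (1/8)·(ε−x³) + x³(1−ε)/(1+x²)^{3/2}. For every μ > 0 and ε > 0 there exists exactly one x > 0 with F₂(x) = 0; i.e., for n = 2 there is exactly one rosette central configuration for every choice of the mass parameters. -/

import Mathlib

open Real


/-- The central configuration function for `n = 2`:
`F₂(x) = (μ/2)(1−x³) + (1/8)(ε−x³) + x³(1−ε)/(1+x²)^{3/2}`. -/
noncomputable def F2 (μ ε x : ℝ) : ℝ :=
  μ / 2 * (1 - x ^ 3) + (1 / 8) * (ε - x ^ 3) +
    x ^ 3 * (1 - ε) / (1 + x ^ 2) ^ ((3 : ℝ) / 2)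

lemma spos (x : ℝ) : 0 < (1 + x ^ 2) ^ ((3:ℝ)/2) :=
  Real.rpow_pos_of_pos (by positivity) _

lemma sq_rpow (x : ℝ) (hx : 0 ≤ x) : (x ^ 2 : ℝ) ^ ((3:ℝ)/2) = x ^ 3 := by
  rw [← Real.rpow_natCast x 2, ← Real.rpow_mul hx, ← Real.rpow_natCast x 3]
  norm_num

lemma T_eq (x : ℝ) (hx : 0 < x) :
    (1 + x ^ 2) ^ ((3:ℝ)/2) / x ^ 3 = (1 + (x⁻¹) ^ 2) ^ ((3:ℝ)/2) := by
  have h1 : (1 + (x⁻¹) ^ 2) = (1 + x ^ 2) / x ^ 2 := by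
    field_simp; ring
  rw [h1, Real.div_rpow (by positivity) (by positivity), sq_rpow x hx.le]

lemma T_anti (y z : ℝ) (hy : 0 < y) (hyz : y < z) :
    (1 + z ^ 2) ^ ((3:ℝ)/2) / z ^ 3 < (1 + y ^ 2) ^ ((3:ℝ)/2) / y ^ 3 := by
  have hz : 0 < z := hy.trans hyz
  rw [T_eq y hy, T_eq z hz]
  have hinv : z⁻¹ < y⁻¹ := inv_strictAnti₀ hy hyz
  have h2 : (z⁻¹) ^ 2 < (y⁻¹) ^ 2 :=
    pow_lt_pow_left₀ hinv (by positivity) (by norm_num)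
  exact Real.rpow_lt_rpow (by positivity) (by linarith) (by norm_num)

lemma s_mono (y z : ℝ) (hy : 0 ≤ y) (hyz : y < z) :
    (1 + y ^ 2) ^ ((3:ℝ)/2) < (1 + z ^ 2) ^ ((3:ℝ)/2) := by
  have h2 : y ^ 2 < z ^ 2 := pow_lt_pow_left₀ hyz hy (by norm_num)
  exact Real.rpow_lt_rpow (by positivity) (by linarith) (by norm_num)

lemma cube_lt_s (x : ℝ) (hx : 0 < x) : x ^ 3 < (1 + x ^ 2) ^ ((3:ℝ)/2) := by
  rw [← sq_rpow x hx.le]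
  exact Real.rpow_lt_rpow (by positivity) (by linarith) (by norm_num)

lemma one_le_s (x : ℝ) : 1 ≤ (1 + x ^ 2) ^ ((3:ℝ)/2) := by
  calc (1:ℝ) = 1 ^ ((3:ℝ)/2) := (Real.one_rpow _).symm
  _ ≤ (1 + x ^ 2) ^ ((3:ℝ)/2) :=
    Real.rpow_le_rpow (by norm_num) (by nlinarith [sq_nonneg x]) (by norm_num)

/-- For every `μ > 0` and `ε > 0` there exists exactly one `x > 0` with `F₂(x) = 0`:
for `n = 2` there is exactly one rosette central configuration. -/
theorem n_eq_two_unique_cc (μ ε : ℝ) (hμ : 0 < μ) (hε : 0 < ε) :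
    ∃! x : ℝ, 0 < x ∧ F2 μ ε x = 0 := by
  obtain ⟨C, hC⟩ : ∃ C : ℝ, C = μ / 2 + ε / 8 := ⟨_, rfl⟩
  obtain ⟨A, hA⟩ : ∃ A : ℝ, A = μ / 2 + 1 / 8 := ⟨_, rfl⟩
  have hCpos : 0 < C := by rw [hC]; positivity
  have hApos : 0 < A := by rw [hA]; positivity
  obtain ⟨Φ, hΦ⟩ : ∃ Φ : ℝ → ℝ, Φ = fun x =>
    C * ((1 + x ^ 2) ^ ((3:ℝ)/2) / x ^ 3) - A * (1 + x ^ 2) ^ ((3:ℝ)/2) - (ε - 1) := ⟨_, rfl⟩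
  -- expansion of F2
  have hexp : ∀ x : ℝ, F2 μ ε x
      = C - A * x ^ 3 + (1 - ε) * (x ^ 3 / (1 + x ^ 2) ^ ((3:ℝ)/2)) := by
    intro x
    unfold F2
    rw [hC, hA]
    ring
  -- factorization
  have hfac : ∀ x : ℝ, 0 < x →
      F2 μ ε x = (x ^ 3 / (1 + x ^ 2) ^ ((3:ℝ)/2)) * Φ x := by
    intro x hx
    rw [hexp x, hΦ]
    have hsne : (1 + x ^ 2) ^ ((3:ℝ)/2) ≠ 0 := (spos x).ne'
    field_simp
    ring
  have root_iff : ∀ x : ℝ, 0 < x → (F2 μ ε x = 0 ↔ Φ x = 0) := by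
    intro x hx
    rw [hfac x hx]
    have h1 : x ^ 3 / (1 + x ^ 2) ^ ((3:ℝ)/2) ≠ 0 := by
      positivity
    simp [h1]
  have anti : ∀ y z : ℝ, 0 < y → y < z → Φ z < Φ y := by
    intro y z hy hyz
    have h1 := T_anti y z hy hyz
    have h2 := s_mono y z hy.le hyz
    have h3 := mul_lt_mul_of_pos_left h1 hCpos
    have h4 := mul_lt_mul_of_pos_left h2 hApos
    simp only [hΦ]
    linarith
  -- continuity
  have hs : Continuous fun x : ℝ => (1 + x ^ 2) ^ ((3:ℝ)/2) :=
    (continuous_const.add (continuous_pow 2)).rpow_const fun x => Or.inl (by show (1:ℝ) + x ^ 2 ≠ 0; positivity)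
  have hcont : Continuous (F2 μ ε) := by
    unfold F2
    exact ((continuous_const.mul (continuous_const.sub (continuous_pow 3))).add
      (continuous_const.mul (continuous_const.sub (continuous_pow 3)))).add
      (((continuous_pow 3).mul continuous_const).div hs fun x => (spos x).ne')
  -- endpoints
  obtain ⟨a, ha0, ha1, ha2⟩ : ∃ a : ℝ, 0 < a ∧ a ≤ 1 ∧ a ≤ C / (2 * (A + 1 + ε)) :=
    ⟨min 1 (C / (2 * (A + 1 + ε))), lt_min one_pos (by positivity),
      min_le_left _ _, min_le_right _ _⟩
  obtain ⟨b, hb1, hb2⟩ : ∃ b : ℝ, 1 ≤ b ∧ 2 * (C + 1 + ε) / A ≤ b :=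
    ⟨max 1 (2 * (C + 1 + ε) / A), le_max_left _ _, le_max_right _ _⟩
  have hab : a ≤ b := ha1.trans hb1
  have hFa : 0 < F2 μ ε a := by
    have ht0 : 0 < a ^ 3 / (1 + a ^ 2) ^ ((3:ℝ)/2) := by positivity
    have ht1 : a ^ 3 / (1 + a ^ 2) ^ ((3:ℝ)/2) ≤ a ^ 3 := by
      rw [div_le_iff₀ (spos a)]
      nlinarith [one_le_s a, pow_pos ha0 3]
    have ha3 : a ^ 3 ≤ a := by nlinarith
    have ha4 : (A + 1 + ε) * a ≤ C / 2 := by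
      rw [le_div_iff₀ (by positivity)] at ha2
      nlinarith
    rw [hexp a]
    nlinarith [mul_nonneg (by positivity : (0:ℝ) ≤ A + 1 + ε) (sub_nonneg.2 ha3),
      mul_nonneg (by positivity : (0:ℝ) ≤ 1 + ε)
        (sub_nonneg.2 ht1)]
  have hFb : F2 μ ε b < 0 := by
    have hb0 : 0 < b := lt_of_lt_of_le one_pos hb1
    have ht0 : 0 < b ^ 3 / (1 + b ^ 2) ^ ((3:ℝ)/2) := by positivity
    have ht1 : b ^ 3 / (1 + b ^ 2) ^ ((3:ℝ)/2) < 1 := by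
      rw [div_lt_one (spos b)]
      exact cube_lt_s b hb0
    have hb3 : b ≤ b ^ 3 := by nlinarith
    have hb4 : 2 * (C + 1 + ε) ≤ A * b := by
      rw [div_le_iff₀ hApos] at hb2
      linarith
    have h5 : A * b ≤ A * b ^ 3 := mul_le_mul_of_nonneg_left hb3 hApos.le
    have h6 : 0 < ε * (b ^ 3 / (1 + b ^ 2) ^ ((3:ℝ)/2)) := mul_pos hε ht0
    rw [hexp b]
    nlinarith [h5, h6, ht1, hb4, hCpos, hε]
  -- IVT
  obtain ⟨x, hxmem, hxroot⟩ :=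
    intermediate_value_Ioo' hab (hcont.continuousOn)
      (show (0:ℝ) ∈ Set.Ioo (F2 μ ε b) (F2 μ ε a) from ⟨hFb, hFa⟩)
  have hx0 : 0 < x := ha0.trans hxmem.1
  refine ⟨x, ⟨hx0, hxroot⟩, ?_⟩
  rintro y ⟨hy0, hyroot⟩
  have hΦx : Φ x = 0 := (root_iff x hx0).1 hxroot
  have hΦy : Φ y = 0 := (root_iff y hy0).1 hyroot
  rcases lt_trichotomy y x with h | h | h
  · have := anti y x hy0 h; rw [hΦx, hΦy] at this; exact absurd this (lt_irrefl 0)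
  · exact h
  · have := anti x y hx0 h; rw [hΦx, hΦy] at this; exact absurd this (lt_irrefl 0)
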